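/- If the Hermitian matrix variable W restricted to the edges of a tree graph on N vertices has all diagonal entries positive and all 2×2 principal submatrices corresponding to tree edges PSD with rank one (i.e., |W_{ij}|² = W_{ii}W_{jj} for every tree edge {i,j}), then there exists a vector v ∈ ℂ^N with |v_i|² = W_{ii} for all i and v_i conj(v_j) = W_{ij} for all tree edges {i,j} (rank-one completion along a tree). -/

import Mathlib

/-- Rank-one completion along a tree: entry data on the vertices and edges of a
tree satisfying the rank-one (PSD, determinant-zero) conditions is realizable by
a vector `v`. -/
theorem rank_one_completion_along_tree (N : ℕ) (G : SimpleGraph (Fin N))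
    (hT : G.IsTree)
    (Wd : Fin N → ℝ) (hWd : ∀ i, 0 < Wd i)
    (Wo : Fin N → Fin N → ℂ)
    (hherm : ∀ i j, G.Adj i j → Wo j i = (starRingEnd ℂ) (Wo i j))
    (hrank1 : ∀ i j, G.Adj i j → Complex.normSq (Wo i j) = Wd i * Wd j) :
    ∃ v : Fin N → ℂ, (∀ i, Complex.normSq (v i) = Wd i) ∧
      ∀ i j, G.Adj i j → v i * (starRingEnd ℂ) (v j) = Wo i j := by
  obtain ⟨r⟩ : Nonempty (Fin N) := hT.isConnected.nonempty
  -- normalized phase data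
  set g : Fin N → Fin N → ℂ := fun i j =>
    Wo i j / ((Real.sqrt (Wd i) : ℂ) * (Real.sqrt (Wd j) : ℂ)) with hg
  have hsqrt_pos : ∀ i, 0 < Real.sqrt (Wd i) := fun i => Real.sqrt_pos.2 (hWd i)
  have hsqrt_ne : ∀ i, (Real.sqrt (Wd i) : ℂ) ≠ 0 := fun i => by
    exact_mod_cast (hsqrt_pos i).ne'
  have hgnorm : ∀ i j, G.Adj i j → Complex.normSq (g i j) = 1 := by
    intro i j hij
    rw [hg]
    simp only [map_div₀, map_mul, Complex.normSq_ofReal, hrank1 i j hij]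
    rw [Real.mul_self_sqrt (hWd i).le, Real.mul_self_sqrt (hWd j).le]
    field_simp [(hWd i).ne', (hWd j).ne']
  have hgsymm : ∀ i j, G.Adj i j → g j i = (starRingEnd ℂ) (g i j) := by
    intro i j hij
    rw [hg]
    simp only [map_div₀, map_mul, Complex.conj_ofReal, hherm i j hij]
    ring
  -- unique paths from the root
  choose p hp hpu using hT.existsUnique_path r
  -- phases
  set u : Fin N → ℂ := fun i => ((p i).darts.map (fun d => g d.snd d.fst)).prod with hu
  have hunorm : ∀ i, Complex.normSq (u i) = 1 := by
    intro i
    rw [hu]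
    rw [map_list_prod (Complex.normSq : ℂ →*₀ ℝ), List.map_map]
    apply List.prod_eq_one
    intro x hx
    simp only [List.mem_map] at hx
    obtain ⟨d, hd, rfl⟩ := hx
    exact hgnorm d.snd d.fst d.adj.symm
  have humul : ∀ i, u i * (starRingEnd ℂ) (u i) = 1 := by
    intro i
    rw [Complex.mul_conj, hunorm i]
    norm_num
  -- the key relation
  have hkey : ∀ i j, G.Adj i j → u i * (starRingEnd ℂ) (u j) = g i j := by
    intro i j hij
    by_cases hmem : j ∈ (p i).support
    · -- p i passes through j; p j is the prefix, and p i = (p j).concat (j → i)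
      have hq : (p i).takeUntil j hmem = p j :=
        hpu j ((p i).takeUntil j hmem) ((hp i).takeUntil hmem)
      have hinot : i ∉ ((p i).takeUntil j hmem).support := by
        intro hcon
        have hnodup := (hp i).support_nodup
        conv at hnodup => rw [← SimpleGraph.Walk.take_spec (p i) hmem]
        rw [SimpleGraph.Walk.support_append] at hnodup
        have hdisj := List.disjoint_of_nodup_append hnodup
        apply hdisj hcon
        have hiend : i ∈ ((p i).dropUntil j hmem).support :=
          SimpleGraph.Walk.end_mem_support _
        rw [SimpleGraph.Walk.support_eq_cons, List.mem_cons] at hiend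
        rcases hiend with h | h
        · exact absurd h.symm hij.ne'
        · exact h
      have hconcat : p i = (p j).concat hij.symm := by
        refine (hpu i _ ?_).symm
        rw [← hq]
        apply SimpleGraph.Walk.IsPath.mk'
        rw [SimpleGraph.Walk.support_concat]
        rw [List.nodup_append']
        refine ⟨((hp i).takeUntil hmem).support_nodup, List.nodup_singleton i, ?_⟩
        intro a ha ha'
        simp only [List.mem_singleton] at ha'
        subst ha'
        exact hinot ha
      have : u i = u j * g i j := by
        rw [hu]
        simp only
        rw [hconcat, SimpleGraph.Walk.darts_concat, List.concat_eq_append,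
          List.map_append, List.prod_append]
        simp
      rw [this]
      rw [mul_comm (u j) (g i j), mul_assoc, humul j, mul_one]
    · -- p i does not pass through j; p j = (p i).concat (i → j)
      have hconcat : p j = (p i).concat hij := by
        refine (hpu j _ ?_).symm
        apply SimpleGraph.Walk.IsPath.mk'
        rw [SimpleGraph.Walk.support_concat, List.nodup_append']
        refine ⟨(hp i).support_nodup, List.nodup_singleton j, ?_⟩
        intro a ha ha'
        simp only [List.mem_singleton] at ha'
        subst ha'
        exact hmem ha
      have : u j = u i * g j i := by
        rw [hu]
        simp only
        rw [hconcat, SimpleGraph.Walk.darts_concat, List.concat_eq_append,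
          List.map_append, List.prod_append]
        simp
      rw [this, map_mul, hgsymm i j hij, Complex.conj_conj]
      rw [← mul_assoc, humul i, one_mul]
  refine ⟨fun i => (Real.sqrt (Wd i) : ℂ) * u i, ?_, ?_⟩
  · intro i
    rw [map_mul, Complex.normSq_ofReal, hunorm i, mul_one, Real.mul_self_sqrt (hWd i).le]
  · intro i j hij
    rw [map_mul, Complex.conj_ofReal]
    calc (Real.sqrt (Wd i) : ℂ) * u i * ((Real.sqrt (Wd j) : ℂ) * (starRingEnd ℂ) (u j))
        = (Real.sqrt (Wd i) : ℂ) * (Real.sqrt (Wd j) : ℂ) * (u i * (starRingEnd ℂ) (u j)) := by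
          ring
      _ = Wo i j := by
          rw [hkey i j hij, hg]
          simp only
          rw [mul_comm, div_mul_cancel₀ _ (mul_ne_zero (hsqrt_ne i) (hsqrt_ne j))]
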